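/- arXiv:2104.12285 — 9 statements merged into one kernel-verified Lean document; each statement's English description precedes it below -/
import Mathlib

section
/- Let l be a list of length m with entries in a type with decidable equality, and let l' be obtained from l by a single move, i.e., by deleting the entry at some position i < m and reinserting it at some position j. Then for every list r, the longest common subsequence lengths satisfy |LCS(l', r) − LCS(l, r)| ≤ 1; in particular LCS(l', r) ≤ LCS(l, r) + 1. -/
/-- Longest common subsequence length. -/
noncomputable def LCS {α : Type*} [DecidableEq α] (a b : List α) : ℕ :=
  sSup {n | ∃ l : List α, l.Sublist a ∧ l.Sublist b ∧ l.length = n}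

/-- `l'` is obtained from `l` by a single move. -/
def IsMove {α : Type*} (l l' : List α) : Prop :=
  ∃ (i j : ℕ) (hi : i < l.length), j < l.length ∧
    l' = (l.eraseIdx i).insertIdx j (l.get ⟨i, hi⟩)

/-- Deleting one entry from `l` costs at most one element of any sublist. -/
lemma exists_sublist_eraseIdx {α : Type*} {s l : List α} (h : s.Sublist l) (i : ℕ) :
    ∃ s' : List α, s'.Sublist (l.eraseIdx i) ∧ s'.Sublist s ∧ s.length ≤ s'.length + 1 := by
  induction h generalizing i with
  | slnil => exact ⟨[], List.Sublist.refl _, List.Sublist.refl _, by simp⟩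
  | @cons s l a hs ih =>
    cases i with
    | zero => exact ⟨s, by simpa using hs, List.Sublist.refl _, by omega⟩
    | succ n =>
      obtain ⟨s', h1, h2, h3⟩ := ih n
      exact ⟨s', by simpa using h1.cons a, h2, h3⟩
  | @cons_cons s l a hs ih =>
    cases i with
    | zero => exact ⟨s, by simpa using hs, (List.Sublist.refl s).cons a, by simp⟩
    | succ n =>
      obtain ⟨s', h1, h2, h3⟩ := ih n
      exact ⟨a :: s', by simpa using h1.cons₂ a, h2.cons₂ a, by simpa using h3⟩

lemma lcs_bdd {α : Type*} [DecidableEq α] (a b : List α) :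
    BddAbove {n | ∃ l : List α, l.Sublist a ∧ l.Sublist b ∧ l.length = n} := by
  refine ⟨a.length, fun n hn => ?_⟩
  obtain ⟨t, h1, _, rfl⟩ := hn
  exact h1.length_le

lemma lcs_mem {α : Type*} [DecidableEq α] (a b : List α) :
    ∃ t : List α, t.Sublist a ∧ t.Sublist b ∧ t.length = LCS a b := by
  have h := Nat.sSup_mem (s := {n | ∃ l : List α, l.Sublist a ∧ l.Sublist b ∧ l.length = n})
    ⟨0, [], by simp⟩ (lcs_bdd a b)
  exact h

lemma le_lcs {α : Type*} [DecidableEq α] {a b t : List α} (h1 : t.Sublist a)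
    (h2 : t.Sublist b) : t.length ≤ LCS a b :=
  le_csSup (lcs_bdd a b) ⟨t, h1, h2, rfl⟩

theorem lcs_move_diff_le_one {α : Type*} [DecidableEq α] (m : ℕ) (l l' : List α)
    (hm : l.length = m) (h : IsMove l l') (r : List α) :
    LCS l' r ≤ LCS l r + 1 ∧ LCS l r ≤ LCS l' r + 1 := by
  obtain ⟨i, j, hi, hj, rfl⟩ := h
  set a := l.get ⟨i, hi⟩
  set e := l.eraseIdx i with he
  -- e is a sublist of both l and l' = insertIdx j a e
  have he_l : e.Sublist l := List.eraseIdx_sublist l i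
  have he_l' : e.Sublist (e.insertIdx j a) := by
    have := List.eraseIdx_sublist (e.insertIdx j a) j
    rwa [List.eraseIdx_insertIdx_self] at this
  constructor
  · -- take optimal common subsequence of l' and r, delete one to land in e
    obtain ⟨t, ht1, ht2, ht3⟩ := lcs_mem (e.insertIdx j a) r
    obtain ⟨s', h1, h2, h3⟩ := exists_sublist_eraseIdx ht1 j
    rw [List.eraseIdx_insertIdx_self] at h1
    have := le_lcs (h1.trans he_l) (h2.trans ht2)
    omega
  · obtain ⟨t, ht1, ht2, ht3⟩ := lcs_mem l r
    obtain ⟨s', h1, h2, h3⟩ := exists_sublist_eraseIdx ht1 i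
    have := le_lcs (h1.trans he_l') (h2.trans ht2)
    omega
end

section
/- Let p and q be permutations of Fin m with words w_p and w_q, let L be a common subsequence of w_p and w_q, and let σ be an entry of w_p that does not occur in L. Then there is a single move applied to w_p producing a list w' such that w' and w_q have a common subsequence of length |L| + 1 whose entries are exactly the entries of L together with σ. -/
/-- The word of a permutation of `Fin m`. -/
def word {m : ℕ} (p : Equiv.Perm (Fin m)) : List (Fin m) :=
  List.ofFn p

private theorem aux_eraseIdx {α : Type*} (c d : List α) (a : α) :
    (c ++ a :: d).eraseIdx c.length = c ++ d := by
  induction c with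
  | nil => simp
  | cons x c ih => simpa [List.eraseIdx] using ih

private theorem aux_get {α : Type*} (c d : List α) (a : α)
    (h : c.length < (c ++ a :: d).length) :
    (c ++ a :: d).get ⟨c.length, h⟩ = a := by
  induction c with
  | nil => simp
  | cons x c ih => simpa using ih (by simpa using Nat.lt_of_succ_lt_succ h)

private theorem aux_insertIdx {α : Type*} (c d : List α) (a : α) :
    (c ++ d).insertIdx c.length a = c ++ a :: d := by
  induction c with
  | nil => simp
  | cons x c ih => simpa [List.insertIdx_succ_cons] using ih

theorem exists_valid_move {m : ℕ} (p q : Equiv.Perm (Fin m)) (L : List (Fin m))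
    (hLp : L.Sublist (word p)) (hLq : L.Sublist (word q))
    (σ : Fin m) (hσp : σ ∈ word p) (hσL : σ ∉ L) :
    ∃ w' : List (Fin m), IsMove (word p) w' ∧
      ∃ L' : List (Fin m), L'.Sublist w' ∧ L'.Sublist (word q) ∧
        L'.length = L.length + 1 ∧ L'.Perm (σ :: L) := by
  -- σ occurs in `word q`
  have hσq : σ ∈ word q := by
    rw [word, List.mem_ofFn]
    exact ⟨q.symm σ, q.apply_symm_apply σ⟩
  obtain ⟨u, v, huv⟩ := List.append_of_mem hσq
  rw [huv] at hLq
  obtain ⟨s, t, rfl, hs, ht'⟩ := List.sublist_append_iff.mp hLq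
  have ht : t.Sublist v := by
    rcases List.sublist_cons_iff.mp ht' with h | ⟨r, hr, _⟩
    · exact h
    · exact absurd (by simp [hr]) (fun h => hσL (List.mem_append_right s h))
  -- decompose `word p` around σ
  obtain ⟨c, d, hcd⟩ := List.append_of_mem hσp
  rw [hcd] at hLp
  obtain ⟨s₂, t₂, hL2, hs₂, ht₂'⟩ := List.sublist_append_iff.mp hLp
  have ht₂ : t₂.Sublist d := by
    rcases List.sublist_cons_iff.mp ht₂' with h | ⟨r, hr, _⟩
    · exact h
    · exact absurd (by simp [hL2, hr]) hσL
  have hLE : (s ++ t).Sublist (c ++ d) := hL2 ▸ hs₂.append ht₂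
  obtain ⟨E₁, E₂, hE, hsE, htE⟩ := List.append_sublist_iff.mp hLE
  refine ⟨E₁ ++ σ :: E₂, ?_, s ++ σ :: t, hsE.append (htE.cons₂ σ),
    huv ▸ hs.append (ht.cons₂ σ), by simp; omega, List.perm_middle⟩
  have hlen : (word p).length = (c ++ σ :: d).length := by rw [hcd]
  have hi : c.length < (word p).length := by
    rw [hlen]; simp
  refine ⟨c.length, E₁.length, hi, ?_, ?_⟩
  · rw [hlen]
    have : E₁.length ≤ (c ++ d).length := by
      rw [hE]; simp
    simp only [List.length_append, List.length_cons] at this ⊢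
    omega
  · have hget : (word p).get ⟨c.length, hi⟩ = σ := by
      rw [List.get_of_eq hcd ⟨c.length, hi⟩]
      exact aux_get c d σ _
    rw [hget]
    have herase : (word p).eraseIdx c.length = c ++ d := by
      rw [hcd]; exact aux_eraseIdx c d σ
    rw [herase, hE, aux_insertIdx]
end

section
/- Let p and q be permutations of Fin m with words w_p and w_q. Then the minimum natural number d such that there exists a chain of lists l₀ = w_p, l₁, …, l_d = w_q, in which each l_{k+1} is obtained from l_k by a single move, equals m − LCS(w_p, w_q). -/
section Aux

variable {α : Type*} [DecidableEq α]

lemma lcs_set_nonempty (a b : List α) :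
    {n | ∃ l : List α, l.Sublist a ∧ l.Sublist b ∧ l.length = n}.Nonempty :=
  ⟨0, [], List.nil_sublist _, List.nil_sublist _, rfl⟩

lemma lcs_set_bdd (a b : List α) :
    BddAbove {n | ∃ l : List α, l.Sublist a ∧ l.Sublist b ∧ l.length = n} :=
  ⟨a.length, fun _ ⟨l, h1, _, h3⟩ => h3 ▸ h1.length_le⟩

lemma exists_lcs (a b : List α) :
    ∃ s : List α, s.Sublist a ∧ s.Sublist b ∧ s.length = LCS a b :=
  Nat.sSup_mem (lcs_set_nonempty a b) (lcs_set_bdd a b)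

lemma length_le_LCS {a b s : List α} (ha : s.Sublist a) (hb : s.Sublist b) :
    s.length ≤ LCS a b :=
  le_csSup (lcs_set_bdd a b) ⟨s, ha, hb, rfl⟩

lemma LCS_le_length (a b : List α) : LCS a b ≤ a.length :=
  csSup_le (lcs_set_nonempty a b) (fun _ ⟨l, h1, _, h3⟩ => h3 ▸ h1.length_le)

lemma LCS_self (a : List α) : LCS a a = a.length :=
  le_antisymm (LCS_le_length a a) (length_le_LCS (List.Sublist.refl a) (List.Sublist.refl a))

/-- Any sublist of `insertIdx j x u` has, after removing at most one element,
a sublist of `u`. -/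
lemma sublist_of_sublist_insertIdx :
    ∀ (j : ℕ) (x : α) (u s : List α), s.Sublist (u.insertIdx j x) →
      ∃ s' : List α, s'.Sublist s ∧ s'.Sublist u ∧ s.length ≤ s'.length + 1
  | 0, x, u, s, h => by
    rw [List.insertIdx_zero] at h
    rcases List.sublist_cons_iff.1 h with h | ⟨r, rfl, hr⟩
    · exact ⟨s, List.Sublist.refl s, h, by omega⟩
    · exact ⟨r, List.sublist_cons_self x r, hr, by simp⟩
  | (j+1), x, [], s, h => by
    rw [List.insertIdx_succ_nil] at h
    exact ⟨s, List.Sublist.refl s, h, by omega⟩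
  | (j+1), x, a :: u, s, h => by
    rw [List.insertIdx_succ_cons] at h
    rcases List.sublist_cons_iff.1 h with h | ⟨r, rfl, hr⟩
    · obtain ⟨s', h1, h2, h3⟩ := sublist_of_sublist_insertIdx j x u s h
      exact ⟨s', h1, h2.trans (List.sublist_cons_self a u), h3⟩
    · obtain ⟨r', h1, h2, h3⟩ := sublist_of_sublist_insertIdx j x u r hr
      exact ⟨a :: r', List.cons_sublist_cons.2 h1, List.cons_sublist_cons.2 h2, by
        simpa using h3⟩

lemma LCS_move_le {l l' r : List α} (h : IsMove l l') : LCS l' r ≤ LCS l r + 1 := by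
  obtain ⟨i, j, hi, hj, rfl⟩ := h
  obtain ⟨s, hs1, hs2, hs3⟩ := exists_lcs ((l.eraseIdx i).insertIdx j (l.get ⟨i, hi⟩)) r
  obtain ⟨s', h1, h2, h3⟩ := sublist_of_sublist_insertIdx j _ (l.eraseIdx i) s hs1
  have : s'.length ≤ LCS l r :=
    length_le_LCS (h2.trans (List.eraseIdx_sublist l i)) (h1.trans hs2)
  omega

lemma insertIdx_prefix_length (u₁ u₂ : List α) (x : α) :
    (u₁ ++ u₂).insertIdx u₁.length x = u₁ ++ x :: u₂ := by
  induction u₁ with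
  | nil => simp [List.insertIdx_zero]
  | cons a u₁ ih => simp [List.insertIdx_succ_cons, ih]

/-- A strict sublist misses some middle element. -/
lemma exists_middle_of_sublist_ne : ∀ {s t : List α}, s.Sublist t → s ≠ t →
    ∃ (a : List α) (x : α) (b : List α), t = a ++ x :: b ∧ s.Sublist (a ++ b) := by
  intro s t h
  induction h with
  | slnil => intro h; exact absurd rfl h
  | cons a h _ =>
    intro _
    exact ⟨[], a, _, rfl, h⟩
  | @cons_cons s t a h ih =>
    intro hne
    have hst : s ≠ t := fun he => hne (by rw [he])
    obtain ⟨u, x, v, rfl, hs⟩ := ih hst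
    refine ⟨a :: u, x, v, rfl, ?_⟩
    rw [List.cons_append]
    exact List.cons_sublist_cons.2 hs

/-- Erasing the entry at position `i` (whose value is not in `s`) preserves
`s` being a sublist. -/
lemma sublist_eraseIdx {l s : List α} {i : ℕ} (hi : i < l.length)
    (hs : s.Sublist l) (hx : l.get ⟨i, hi⟩ ∉ s) : s.Sublist (l.eraseIdx i) := by
  have hdecomp : l = l.take i ++ l.get ⟨i, hi⟩ :: l.drop (i + 1) := by
    conv_lhs => rw [← List.take_append_drop i l]
    congr 1
    rw [List.drop_eq_getElem_cons hi]
    rfl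
  rw [List.eraseIdx_eq_take_drop_succ]
  rw [hdecomp] at hs
  obtain ⟨s₁, s₂, rfl, h1, h2⟩ := List.sublist_append_iff.1 hs
  rcases List.sublist_cons_iff.1 h2 with h2 | ⟨r, rfl, hr⟩
  · exact h1.append h2
  · exact absurd (by simp) hx

/-- The key step: one move strictly extends a common subsequence. -/
lemma move_step {l s t : List α} (hl : l.Perm t) (hnd : t.Nodup)
    (hsl : s.Sublist l) (hst : s.Sublist t) (hlen : s.length < t.length) :
    ∃ l' s' : List α, IsMove l l' ∧ l'.Perm t ∧ s'.Sublist l' ∧ s'.Sublist t ∧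
      s'.length = s.length + 1 := by
  have hne : s ≠ t := by intro he; rw [he] at hlen; omega
  obtain ⟨a, x, b, rfl, hsab⟩ := exists_middle_of_sublist_ne hst hne
  have hxs : x ∉ s := by
    intro hxmem
    have hxab : x ∈ a ++ b := hsab.subset hxmem
    have := hnd
    rw [List.nodup_append] at this
    rcases List.mem_append.1 hxab with h | h
    · exact this.2.2 x h x List.mem_cons_self rfl
    · exact (List.nodup_cons.1 this.2.1).1 h
  -- x is in l
  have hxl : x ∈ l := hl.mem_iff.2 (by simp)
  obtain ⟨i, hi, hix⟩ := List.mem_iff_getElem.1 hxl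
  have hget : l.get ⟨i, hi⟩ = x := hix
  -- s is a sublist of l with x erased
  have hsu : s.Sublist (l.eraseIdx i) := sublist_eraseIdx hi hsl (by rw [hget]; exact hxs)
  -- decompose s along a ++ b and along eraseIdx
  obtain ⟨s₁, s₂, rfl, hs₁a, hs₂b⟩ := List.sublist_append_iff.1 hsab
  obtain ⟨u₁, u₂, hu, hs₁u, hs₂u⟩ := List.append_sublist_iff.1 hsu
  set u := l.eraseIdx i with hudef
  have hulen : u.length + 1 = l.length := by
    rw [hudef, List.length_eraseIdx_of_lt hi]; omega
  have hj : u₁.length < l.length := by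
    have : u₁.length ≤ u.length := by rw [hu]; simp
    omega
  refine ⟨u.insertIdx u₁.length x, s₁ ++ x :: s₂, ⟨i, u₁.length, hi, hj, by rw [hget]⟩,
    ?_, ?_, ?_, by simp; omega⟩
  · -- permutation
    have h1 : (u.insertIdx u₁.length x).Perm (x :: u) :=
      List.perm_insertIdx x u (by omega)
    have hdecomp : l = l.take i ++ x :: l.drop (i + 1) := by
      conv_lhs => rw [← List.take_append_drop i l]
      congr 1
      rw [List.drop_eq_getElem_cons hi, hix]
    have h2 : (x :: u).Perm l := by
      rw [hudef, List.eraseIdx_eq_take_drop_succ]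
      conv_rhs => rw [hdecomp]
      exact List.perm_middle.symm
    exact (h1.trans h2).trans hl
  · -- sublist of new list
    rw [hu, insertIdx_prefix_length]
    exact hs₁u.append (List.cons_sublist_cons.2 hs₂u)
  · -- sublist of t
    exact hs₁a.append (List.cons_sublist_cons.2 hs₂b)

/-- Chain construction. -/
lemma exists_chain : ∀ (n : ℕ) {l s t : List α}, l.Perm t → t.Nodup →
    s.Sublist l → s.Sublist t → t.length = s.length + n →
    ∃ c : ℕ → List α, c 0 = l ∧ c n = t ∧ ∀ k < n, IsMove (c k) (c (k + 1))
  | 0, l, s, t, hl, _, hsl, hst, hlen => by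
    have hst' : s = t := hst.eq_of_length (by omega)
    have hsl' : s = l := hsl.eq_of_length (by rw [hl.length_eq]; omega)
    exact ⟨fun _ => t, by rw [← hst', hsl'], rfl, fun k hk => absurd hk (by omega)⟩
  | (n+1), l, s, t, hl, hnd, hsl, hst, hlen => by
    obtain ⟨l', s', hm, hl', hs'l', hs't, hs'len⟩ :=
      move_step hl hnd hsl hst (by omega)
    obtain ⟨c', hc0, hcn, hmove⟩ :=
      exists_chain n hl' hnd hs'l' hs't (by omega)
    refine ⟨fun k => match k with | 0 => l | (k+1) => c' k, rfl, hcn, ?_⟩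
    intro k hk
    match k with
    | 0 => simpa [hc0] using hm
    | (k+1) => exact hmove k (by omega)

end Aux

theorem min_move_schedule_size {m : ℕ} (p q : Equiv.Perm (Fin m)) :
    IsLeast {d : ℕ | ∃ c : ℕ → List (Fin m), c 0 = word p ∧ c d = word q ∧
        ∀ k < d, IsMove (c k) (c (k + 1))}
      (m - LCS (word p) (word q)) := by
  have hlenp : (word p).length = m := by simp [word]
  have hlenq : (word q).length = m := by simp [word]
  have hndq : (word q).Nodup := List.nodup_ofFn.2 q.injective
  have hperm : (word p).Perm (word q) := by
    refine List.perm_ext_iff_of_nodup (List.nodup_ofFn.2 p.injective) hndq |>.2 ?_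
    intro a
    simp only [word, List.mem_ofFn]
    constructor
    · intro _; exact ⟨q.symm a, by simp⟩
    · intro _; exact ⟨p.symm a, by simp⟩
  have hLCSle : LCS (word p) (word q) ≤ m := by
    have := LCS_le_length (word p) (word q); omega
  constructor
  · -- membership
    obtain ⟨s, hsp, hsq, hslen⟩ := exists_lcs (word p) (word q)
    obtain ⟨c, hc0, hcd, hmv⟩ := exists_chain (m - LCS (word p) (word q))
      hperm hndq hsp hsq (by omega)
    exact ⟨c, hc0, hcd, hmv⟩
  · -- lower bound
    rintro d ⟨c, hc0, hcd, hmv⟩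
    have key : ∀ k ≤ d, LCS (c k) (word q) ≤ LCS (c 0) (word q) + k := by
      intro k hk
      induction k with
      | zero => omega
      | succ k ih =>
        have h1 := LCS_move_le (r := word q) (hmv k (by omega))
        have h2 := ih (by omega)
        omega
    have h := key d le_rfl
    rw [hcd, hc0, LCS_self, hlenq] at h
    omega
end

section
/- For any permutations p and q of Fin m, the longest common subsequence length of their words equals the longest strictly increasing subsequence length of the word of q⁻¹ ∘ p; that is, LCS(w_p, w_q) = LIS(w_{q⁻¹∘p}). -/
/-- Longest strictly increasing subsequence length. -/
noncomputable def LIS {α : Type*} [LinearOrder α] (l : List α) : ℕ :=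
  sSup {n | ∃ s : List α, s.Sublist l ∧ s.Pairwise (· < ·) ∧ s.length = n}

lemma sublist_finRange_iff {m : ℕ} {s : List (Fin m)} :
    s.Sublist (List.finRange m) ↔ s.Pairwise (· < ·) := by
  constructor
  · intro h
    exact List.Pairwise.sublist h (List.pairwise_lt_finRange m)
  · intro h
    apply List.sublist_of_subperm_of_pairwise _ h
      ((List.pairwise_lt_finRange m) : List.Pairwise (· < ·) _)
    exact List.subperm_of_subset (h.imp ne_of_lt) (fun x _ => List.mem_finRange x)

lemma sublist_word_iff {m : ℕ} (r : Equiv.Perm (Fin m)) {l : List (Fin m)} :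
    l.Sublist (word r) ↔ (l.map ⇑r⁻¹).Sublist (List.finRange m) := by
  constructor
  · intro h
    have := h.map ⇑r⁻¹
    rwa [word, List.ofFn_eq_map, List.map_map, Equiv.Perm.inv_def,
      Equiv.symm_comp_self, List.map_id] at this
  · intro h
    have := h.map ⇑r
    rwa [List.map_map, Equiv.Perm.inv_def, Equiv.self_comp_symm, List.map_id,
      ← List.ofFn_eq_map, ← word] at this

theorem lcs_eq_lis_inv_comp {m : ℕ} (p q : Equiv.Perm (Fin m)) :
    LCS (word p) (word q) = LIS (word (q⁻¹ * p)) := by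
  unfold LCS LIS
  congr 1
  ext n
  have hw : word (q⁻¹ * p) = (word p).map ⇑q⁻¹ := by
    simp [word, List.ofFn_eq_map, List.map_map]
  constructor
  · rintro ⟨l, hlp, hlq, rfl⟩
    refine ⟨l.map ⇑q⁻¹, ?_, ?_, by simp⟩
    · rw [hw]; exact hlp.map _
    · exact sublist_finRange_iff.mp ((sublist_word_iff q).mp hlq)
  · rintro ⟨s, hs, hsort, rfl⟩
    refine ⟨s.map ⇑q, ?_, ?_, by simp⟩
    · have := hs.map ⇑q
      rwa [hw, List.map_map, Equiv.Perm.inv_def, Equiv.self_comp_symm,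
        List.map_id] at this
    · rw [sublist_word_iff q, List.map_map, Equiv.Perm.inv_def,
        Equiv.symm_comp_self, List.map_id]
      exact sublist_finRange_iff.mpr hsort
end

section
/- For all permutations p and q of Fin m, the Kendall tau distance and the Spearman footrule distance satisfy K(p, q) ≤ F(p, q) ≤ 2 · K(p, q). -/
/-- The Kendall tau distance between two permutations of `Fin m`: the number of
pairs `i < j` such that exactly one of `p⁻¹ i < p⁻¹ j` and `q⁻¹ i < q⁻¹ j` holds. -/
def kendall {m : ℕ} (p q : Equiv.Perm (Fin m)) : ℕ :=
  (Finset.univ.filter fun ij : Fin m × Fin m =>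
    ij.1 < ij.2 ∧ ¬((p⁻¹ ij.1 < p⁻¹ ij.2) ↔ (q⁻¹ ij.1 < q⁻¹ ij.2))).card

/-- The Spearman footrule distance between two permutations of `Fin m`. -/
def spearman {m : ℕ} (p q : Equiv.Perm (Fin m)) : ℤ :=
  ∑ i : Fin m, |(((p⁻¹ i : Fin m) : ℕ) : ℤ) - (((q⁻¹ i : Fin m) : ℕ) : ℤ)|

open Finset

namespace DG
variable {m : ℕ}


def invp (σ : Equiv.Perm (Fin m)) : ℕ :=
  (Finset.univ.filter fun p : Fin m × Fin m => p.1 < p.2 ∧ σ p.2 < σ p.1).card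

def v {m : ℕ} (t : Fin m) : ℤ := ((t : ℕ) : ℤ)

def Fp (σ : Equiv.Perm (Fin m)) : ℤ := ∑ t : Fin m, |v (σ t) - v t|

def r (σ : Equiv.Perm (Fin m)) (t : Fin m) : ℕ :=
  (Finset.univ.filter fun s => s < t ∧ σ t < σ s).card

lemma invp_eq_sum_r (σ : Equiv.Perm (Fin m)) : invp σ = ∑ t : Fin m, r σ t := by
  unfold invp r
  rw [Finset.card_eq_sum_card_fiberwise (f := fun p : Fin m × Fin m => p.2)
    (t := Finset.univ) (fun x _ => mem_univ _)]
  refine Finset.sum_congr rfl fun t _ => ?_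
  refine Finset.card_nbij' (fun p => p.1) (fun s => (s, t)) ?_ ?_ ?_ ?_
  · intro p hp
    simp only [Finset.mem_coe, mem_filter, mem_univ, true_and] at hp ⊢
    obtain ⟨⟨h1, h2⟩, h3⟩ := hp
    subst h3; exact ⟨h1, h2⟩
  · intro s hs
    simp only [Finset.mem_coe, mem_filter, mem_univ, true_and] at hs ⊢
    exact ⟨hs, trivial⟩
  · intro p hp
    simp only [Finset.mem_coe, mem_filter, mem_univ, true_and] at hp
    obtain ⟨-, h3⟩ := hp
    simp [← h3]
  · intro s hs; rfl

lemma eq_one_of_invp_zero (σ : Equiv.Perm (Fin m)) (h : invp σ = 0) : σ = 1 := by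
  have hsm : StrictMono σ := by
    intro a b hab
    rcases lt_or_ge (σ a) (σ b) with h' | h'
    · exact h'
    · exfalso
      have hne : σ b ≠ σ a := fun he => absurd (σ.injective he) (ne_of_gt hab)
      have : (a, b) ∈ Finset.univ.filter
          fun p : Fin m × Fin m => p.1 < p.2 ∧ σ p.2 < σ p.1 := by
        simp only [mem_filter, mem_univ, true_and]
        exact ⟨hab, lt_of_le_of_ne h' hne⟩
      have := Finset.card_pos.mpr ⟨_, this⟩
      unfold invp at h
      omega
  have hr : Set.range ⇑σ = Set.range (id : Fin m → Fin m) := by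
    rw [Set.range_id, Set.range_eq_univ]; exact σ.surjective
  haveI : WellFoundedLT (Fin m) := inferInstance
  have hfe : ⇑σ = id := (StrictMono.range_inj (β := Fin m) (γ := Fin m) hsm strictMono_id).mp hr
  exact Equiv.ext fun x => congrFun hfe x

lemma invp_one : invp (1 : Equiv.Perm (Fin m)) = 0 := by
  unfold invp
  rw [Finset.card_eq_zero, Finset.filter_eq_empty_iff]
  rintro p -
  simp only [Equiv.Perm.coe_one, id_eq, not_and]
  intro h; exact fun h' => absurd h (lt_asymm h')

lemma Fp_one : Fp (1 : Equiv.Perm (Fin m)) = 0 := by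
  unfold Fp v; simp



lemma swap_pair_lt {i j a b : Fin m} (hj : (j : ℕ) = (i : ℕ) + 1) (hab : a < b)
    (hne : ¬(a = i ∧ b = j)) :
    Equiv.swap i j a < Equiv.swap i j b ∧ ¬(Equiv.swap i j a = i ∧ Equiv.swap i j b = j) := by
  have hij : i ≠ j := by intro h; rw [h] at hj; omega
  have hab' : (a : ℕ) < (b : ℕ) := hab
  by_cases hai : a = i
  · have hbj : b ≠ j := fun h => hne ⟨hai, h⟩
    have hbi : b ≠ i := by
      intro h; rw [← hai] at h; exact absurd (h ▸ hab) (lt_irrefl _)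
    rw [hai, Equiv.swap_apply_left, Equiv.swap_apply_of_ne_of_ne hbi hbj]
    have h1 : (a : ℕ) = (i : ℕ) := by rw [hai]
    have h2 : (b : ℕ) ≠ (j : ℕ) := Fin.val_ne_of_ne hbj
    exact ⟨by rw [Fin.lt_def]; omega, fun h => absurd h.2 hbj⟩
  · by_cases haj : a = j
    · have hbi : b ≠ i := by
        intro h
        have := Fin.val_eq_of_eq h
        have := Fin.val_eq_of_eq haj
        omega
      have hbj : b ≠ j := by
        intro h; rw [← haj] at h; exact absurd (h ▸ hab) (lt_irrefl _)
      rw [haj, Equiv.swap_apply_right, Equiv.swap_apply_of_ne_of_ne hbi hbj]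
      have h1 : (a : ℕ) = (j : ℕ) := by rw [haj]
      exact ⟨by rw [Fin.lt_def]; omega, fun h => absurd h.2 hbj⟩
    · by_cases hbi : b = i
      · have h1 : (b : ℕ) = (i : ℕ) := by rw [hbi]
        rw [hbi, Equiv.swap_apply_left, Equiv.swap_apply_of_ne_of_ne hai haj]
        refine ⟨by rw [Fin.lt_def]; omega, fun h => absurd h.1 hai⟩
      · by_cases hbj : b = j
        · have h1 : (b : ℕ) = (j : ℕ) := by rw [hbj]
          have h2 : (a : ℕ) ≠ (i : ℕ) := Fin.val_ne_of_ne hai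
          rw [hbj, Equiv.swap_apply_right, Equiv.swap_apply_of_ne_of_ne hai haj]
          refine ⟨by rw [Fin.lt_def]; omega, fun h => absurd h.1 hai⟩
        · rw [Equiv.swap_apply_of_ne_of_ne hai haj, Equiv.swap_apply_of_ne_of_ne hbi hbj]
          exact ⟨hab, fun h => hne ⟨h.1, h.2⟩⟩

lemma invp_swap_adj (σ : Equiv.Perm (Fin m)) {i j : Fin m} (hj : (j : ℕ) = (i : ℕ) + 1)
    (hd : σ j < σ i) : invp σ = invp (σ * Equiv.swap i j) + 1 := by
  classical
  have hijlt : i < j := by rw [Fin.lt_def]; omega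
  set σ' := σ * Equiv.swap i j with hσ'
  have happ : ∀ x, σ' (Equiv.swap i j x) = σ x := by
    intro x; simp [hσ', Equiv.Perm.mul_apply, Equiv.swap_apply_self]
  have happ2 : ∀ x, σ' x = σ (Equiv.swap i j x) := fun x => rfl
  set A := Finset.univ.filter fun p : Fin m × Fin m => p.1 < p.2 ∧ σ p.2 < σ p.1 with hA
  set B := Finset.univ.filter fun p : Fin m × Fin m => p.1 < p.2 ∧ σ' p.2 < σ' p.1 with hB
  have hmem : (i, j) ∈ A := by simp [hA, hijlt, hd]
  have hcard : (A.erase (i, j)).card = B.card := by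
    refine Finset.card_nbij' (fun p => (Equiv.swap i j p.1, Equiv.swap i j p.2))
      (fun p => (Equiv.swap i j p.1, Equiv.swap i j p.2)) ?_ ?_ ?_ ?_
    · intro p hp
      rw [Finset.mem_coe, Finset.mem_erase] at hp
      obtain ⟨hpne, hpA⟩ := hp
      simp only [hA, mem_filter, mem_univ, true_and] at hpA
      obtain ⟨h1, h2⟩ := hpA
      have hne' : ¬(p.1 = i ∧ p.2 = j) := fun ⟨u1, u2⟩ => hpne (Prod.ext u1 u2)
      obtain ⟨hlt, -⟩ := swap_pair_lt hj h1 hne'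
      simp only [Finset.mem_coe, hB, mem_filter, mem_univ, true_and]
      exact ⟨hlt, by rw [happ, happ]; exact h2⟩
    · intro p hp
      simp only [Finset.mem_coe, hB, mem_filter, mem_univ, true_and] at hp
      obtain ⟨h1, h2⟩ := hp
      have hne' : ¬(p.1 = i ∧ p.2 = j) := by
        rintro ⟨u1, u2⟩
        rw [u1, u2, happ2 i, happ2 j, Equiv.swap_apply_left, Equiv.swap_apply_right] at h2
        exact absurd hd (lt_asymm h2)
      obtain ⟨hlt, hne2⟩ := swap_pair_lt hj h1 hne'
      rw [Finset.mem_coe, Finset.mem_erase]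
      refine ⟨fun h => hne2 ⟨congrArg Prod.fst h, congrArg Prod.snd h⟩, ?_⟩
      simp only [hA, mem_filter, mem_univ, true_and]
      exact ⟨hlt, by rw [← happ2 p.1, ← happ2 p.2]; exact h2⟩
    · intro p hp; simp [Equiv.swap_apply_self]
    · intro p hp; simp [Equiv.swap_apply_self]
  have hc2 : A.card = (A.erase (i, j)).card + 1 := by
    rw [Finset.card_erase_of_mem hmem]
    have := Finset.card_pos.mpr ⟨_, hmem⟩
    omega
  unfold invp
  rw [← hA, ← hB, hc2, hcard]



lemma Fp_mul_swap (σ : Equiv.Perm (Fin m)) {i j : Fin m} (hne : i ≠ j) :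
    Fp σ - Fp (σ * Equiv.swap i j) =
      (|v (σ i) - v i| - |v (σ i) - v j|) + (|v (σ j) - v j| - |v (σ j) - v i|) := by
  have h1 : Fp (σ * Equiv.swap i j) = ∑ t : Fin m, |v (σ t) - v (Equiv.swap i j t)| := by
    unfold Fp
    rw [← Equiv.sum_comp (Equiv.swap i j)
      (fun t => |v ((σ * Equiv.swap i j) t) - v t|)]
    refine Finset.sum_congr rfl fun t _ => ?_
    simp [Equiv.Perm.mul_apply, Equiv.swap_apply_self]
  rw [h1]
  unfold Fp
  rw [← Finset.sum_sub_distrib]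
  rw [← Finset.sum_subset (Finset.subset_univ ({i, j} : Finset (Fin m)))
    (f := fun t => |v (σ t) - v t| - |v (σ t) - v (Equiv.swap i j t)|)
    (by
      intro x _ hx
      simp only [Finset.mem_insert, Finset.mem_singleton] at hx
      push_neg at hx
      rw [Equiv.swap_apply_of_ne_of_ne hx.1 hx.2]
      ring)]
  rw [Finset.sum_pair hne, Equiv.swap_apply_left, Equiv.swap_apply_right]

lemma Fp_adj_le (σ : Equiv.Perm (Fin m)) {i j : Fin m} (hj : (j : ℕ) = (i : ℕ) + 1) :
    Fp σ ≤ Fp (σ * Equiv.swap i j) + 2 := by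
  have hne : i ≠ j := by intro h; rw [h] at hj; omega
  have hd := Fp_mul_swap σ hne
  have hvl : v j - v i = 1 := by unfold v; omega
  have b1 : |v (σ i) - v i| - |v (σ i) - v j| ≤ |(v (σ i) - v i) - (v (σ i) - v j)| :=
    abs_sub_abs_le_abs_sub _ _
  have b2 : |v (σ j) - v j| - |v (σ j) - v i| ≤ |(v (σ j) - v j) - (v (σ j) - v i)| :=
    abs_sub_abs_le_abs_sub _ _
  have e1 : (v (σ i) - v i) - (v (σ i) - v j) = 1 := by rw [← hvl]; ring
  have e2 : (v (σ j) - v j) - (v (σ j) - v i) = -1 := by linarith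
  rw [e1] at b1; rw [e2] at b2
  simp only [abs_one] at b1
  rw [show |(-1 : ℤ)| = 1 by norm_num] at b2
  linarith

lemma exists_adj_descent (σ : Equiv.Perm (Fin m)) (h : invp σ ≠ 0) :
    ∃ i j : Fin m, (j : ℕ) = (i : ℕ) + 1 ∧ σ j < σ i := by
  by_contra hc
  push_neg at hc
  have habs : ∀ i j : Fin m, (j : ℕ) = (i : ℕ) + 1 → σ i < σ j := by
    intro i j hij
    have h1 := hc i j hij
    have hne : i ≠ j := by intro h; rw [h] at hij; omega
    rcases lt_trichotomy (σ i) (σ j) with h' | h' | h'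
    · exact h'
    · exact absurd (σ.injective h') hne
    · exact absurd h' (not_lt.mpr h1)
  have key : ∀ d : ℕ, ∀ k l : Fin m, (l : ℕ) = (k : ℕ) + d + 1 → σ k < σ l := by
    intro d
    induction d with
    | zero => intro k l hl; exact habs k l (by omega)
    | succ d ih =>
      intro k l hl
      have hlm : (k : ℕ) + d + 1 < m := by have := l.isLt; omega
      exact lt_trans (ih k ⟨(k : ℕ) + d + 1, hlm⟩ rfl) (habs ⟨(k : ℕ) + d + 1, hlm⟩ l (by simp; omega))
  apply h
  unfold invp
  rw [Finset.card_eq_zero, Finset.filter_eq_empty_iff]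
  rintro p -
  rintro ⟨h1, h2⟩
  have h1' : (p.2 : ℕ) = (p.1 : ℕ) + ((p.2 : ℕ) - (p.1 : ℕ) - 1) + 1 := by
    have : (p.1 : ℕ) < (p.2 : ℕ) := h1
    omega
  exact absurd h2 (lt_asymm (key _ p.1 p.2 h1'))

lemma Fp_le_two_invp (σ : Equiv.Perm (Fin m)) : Fp σ ≤ 2 * (invp σ : ℤ) := by
  suffices h : ∀ (n : ℕ) (σ : Equiv.Perm (Fin m)), invp σ = n → Fp σ ≤ 2 * (n : ℤ) from
    h (invp σ) σ rfl
  intro n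
  induction n with
  | zero =>
    intro σ h
    rw [eq_one_of_invp_zero σ h, Fp_one]
    norm_num
  | succ n ih =>
    intro σ h
    obtain ⟨i, j, hij, hd⟩ := exists_adj_descent σ (by omega)
    have h1 := invp_swap_adj σ hij hd
    have h2 : invp (σ * Equiv.swap i j) = n := by omega
    have h3 := ih (σ * Equiv.swap i j) h2
    have h4 := Fp_adj_le σ hij
    push_cast
    linarith



lemma homing (σ : Equiv.Perm (Fin m)) (hσ : σ ≠ 1) :
    ∃ σ' : Equiv.Perm (Fin m),
      (Finset.univ.filter fun t => σ' t ≠ t).card <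
        (Finset.univ.filter fun t => σ t ≠ t).card ∧
      (invp σ : ℤ) - invp σ' ≤ Fp σ - Fp σ' := by
  classical
  set NF := Finset.univ.filter fun t => σ t ≠ t with hNF
  have hne : NF.Nonempty := by
    rcases Finset.eq_empty_or_nonempty NF with h | h
    · exfalso; apply hσ; ext x
      by_contra hx
      have : x ∈ NF := by simp [hNF]; exact fun h' => hx (by simp [h'])
      simp [h] at this
    · exact h
  set j := NF.max' hne with hj
  have hjNF : j ∈ NF := NF.max'_mem hne
  have hjne : σ j ≠ j := by simpa [hNF] using hjNF
  have hfix : ∀ t, j < t → σ t = t := by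
    intro t ht
    by_contra hc
    have : t ∈ NF := by simp [hNF, hc]
    exact absurd (NF.le_max' t this) (not_le.mpr ht)
  set i := σ⁻¹ j with hi
  set a := σ j with ha
  have hσi : σ i = j := Equiv.apply_symm_apply σ j
  have haj : a < j := by
    rcases lt_trichotomy a j with h | h | h
    · exact h
    · exact absurd h hjne
    · exfalso
      have h2 : σ a = a := hfix a h
      exact hjne (σ.injective (h2.trans ha))
  have hine : i ≠ j := by
    intro h
    exact hjne (ha.trans ((congrArg σ h.symm).trans hσi))
  have hij : i < j := by
    rcases lt_trichotomy i j with h | h | h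
    · exact h
    · exact absurd h hine
    · exact absurd ((hfix i h).symm.trans hσi) hine
  have hlt : ∀ t, t < j → t ≠ i → σ t < j := by
    intro t htj hti
    have h1 : σ t ≠ j := fun h => hti (σ.injective (h.trans hσi.symm))
    rcases lt_trichotomy (σ t) j with h | h | h
    · exact h
    · exact absurd h h1
    · exfalso
      have h2 : σ t = t := σ.injective (hfix (σ t) h)
      rw [h2] at h
      exact absurd htj (lt_asymm h)
  set σ' := σ * Equiv.swap i j with hσ'
  have hσ'i : σ' i = a := by simp [hσ', Equiv.Perm.mul_apply, Equiv.swap_apply_left, ha]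
  have hσ'j : σ' j = j := by simp [hσ', Equiv.Perm.mul_apply, Equiv.swap_apply_right, hσi]
  have hσ't : ∀ t, t ≠ i → t ≠ j → σ' t = σ t := by
    intro t h1 h2; simp [hσ', Equiv.Perm.mul_apply, Equiv.swap_apply_of_ne_of_ne h1 h2]
  refine ⟨σ', ?_, ?_⟩
  · -- support decreases
    have hsub : (Finset.univ.filter fun t => σ' t ≠ t) ⊆ NF.erase j := by
      intro t ht
      simp only [mem_filter, mem_univ, true_and] at ht
      rw [Finset.mem_erase]
      have htj : t ≠ j := fun h => ht (h ▸ hσ'j)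
      refine ⟨htj, ?_⟩
      simp only [hNF, mem_filter, mem_univ, true_and]
      by_cases hti : t = i
      · rw [hti, hσi]; exact Ne.symm hine
      · rw [← hσ't t hti htj]; exact ht
    calc (Finset.univ.filter fun t => σ' t ≠ t).card ≤ (NF.erase j).card :=
          Finset.card_le_card hsub
      _ < NF.card := by
          rw [Finset.card_erase_of_mem hjNF]
          have := Finset.card_pos.mpr ⟨_, hjNF⟩
          omega
  · -- inversion/footrule inequality
    set Qset := Finset.univ.filter (fun s => (i < s ∧ s < j) ∧ a < σ s) with hQset
    set Q := Qset.card with hQ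
    set Pset := Finset.univ.filter (fun s => s < i ∧ a < σ s) with hPset
    have hP : r σ' i = Pset.card := by
      unfold r
      rw [hPset]
      refine congrArg Finset.card (Finset.filter_congr fun s _ => ?_)
      constructor
      · rintro ⟨h1, h2⟩
        rw [hσ'i, hσ't s (ne_of_lt h1) (ne_of_lt (lt_trans h1 hij))] at h2
        exact ⟨h1, h2⟩
      · rintro ⟨h1, h2⟩
        rw [hσ'i, hσ't s (ne_of_lt h1) (ne_of_lt (lt_trans h1 hij))]
        exact ⟨h1, h2⟩
    -- pointwise bound
    have hpt : ∀ t, (r σ t : ℤ) - r σ' t ≤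
        (if t = j then (Pset.card : ℤ) + 1 + Q else 0) -
        (if t = i then (Pset.card : ℤ) else 0) +
        (if (i < t ∧ t < j) ∧ a < σ t then 1 else 0) := by
      intro t
      by_cases htj : t = j
      · subst htj
        rw [if_pos rfl, if_neg (fun h => hine (h.symm ▸ rfl) : ¬ (j = i))]
        rw [if_neg (by rintro ⟨⟨-, h⟩, -⟩; exact absurd h (lt_irrefl _))]
        have hrj : r σ j ≤ Pset.card + 1 + Q := by
          have hsub : (Finset.univ.filter fun s => s < j ∧ σ j < σ s) ⊆
              Pset ∪ {i} ∪ Qset := by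
            intro s hs
            simp only [mem_filter, mem_univ, true_and] at hs
            obtain ⟨h1, h2⟩ := hs
            rw [← ha] at h2
            simp only [Finset.mem_union, Finset.mem_singleton, hPset, hQset,
              mem_filter, mem_univ, true_and]
            rcases lt_trichotomy s i with h | h | h
            · exact Or.inl (Or.inl ⟨h, h2⟩)
            · exact Or.inl (Or.inr h)
            · exact Or.inr ⟨⟨h, h1⟩, h2⟩
          calc r σ j ≤ (Pset ∪ {i} ∪ Qset).card := Finset.card_le_card hsub
            _ ≤ (Pset ∪ {i}).card + Qset.card := Finset.card_union_le _ _
            _ ≤ Pset.card + 1 + Qset.card := by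
                have := Finset.card_union_le Pset ({i} : Finset (Fin m))
                rw [Finset.card_singleton] at this
                omega
        have : (0 : ℤ) ≤ r σ' j := Int.natCast_nonneg _
        omega
      · by_cases hti : t = i
        · subst hti
          rw [if_neg htj, if_pos rfl,
            if_neg (by rintro ⟨⟨h, -⟩, -⟩; exact absurd h (lt_irrefl _))]
          have hri : r σ i = 0 := by
            unfold r
            rw [Finset.card_eq_zero, Finset.filter_eq_empty_iff]
            rintro s -
            rintro ⟨h1, h2⟩
            rw [hσi] at h2
            exact absurd (hlt s (lt_trans h1 hij) (ne_of_lt h1)) (lt_asymm h2)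
          rw [hri, hP]
          push_cast
          omega
        · -- t ∉ {i, j}
          rw [if_neg htj, if_neg hti]
          have hσ'tt := hσ't t hti htj
          rcases lt_trichotomy t i with hlti | heq | hgti
          · -- t < i : sets equal (⊆ suffices)
            rw [if_neg (by rintro ⟨⟨h, -⟩, -⟩; exact absurd hlti (lt_asymm h))]
            have hsub : (Finset.univ.filter fun s => s < t ∧ σ t < σ s) ⊆
                (Finset.univ.filter fun s => s < t ∧ σ' t < σ' s) := by
              intro s hs
              simp only [mem_filter, mem_univ, true_and] at hs ⊢
              obtain ⟨h1, h2⟩ := hs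
              have hs1 : s ≠ i := ne_of_lt (lt_trans h1 hlti)
              have hs2 : s ≠ j := ne_of_lt (lt_trans (lt_trans h1 hlti) hij)
              rw [hσ't s hs1 hs2, hσ'tt]
              exact ⟨h1, h2⟩
            have := Finset.card_le_card hsub
            unfold r
            push_cast
            omega
          · exact absurd heq hti
          · rcases lt_trichotomy t j with hltj2 | heq2 | hgtj2
            · -- i < t < j
              by_cases hat : a < σ t
              · rw [if_pos ⟨⟨hgti, hltj2⟩, hat⟩]
                have hsub : (Finset.univ.filter fun s => s < t ∧ σ t < σ s) ⊆
                    insert i (Finset.univ.filter fun s => s < t ∧ σ' t < σ' s) := by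
                  intro s hs
                  simp only [mem_filter, mem_univ, true_and] at hs
                  obtain ⟨h1, h2⟩ := hs
                  rw [Finset.mem_insert]
                  by_cases hs1 : s = i
                  · exact Or.inl hs1
                  · refine Or.inr ?_
                    simp only [mem_filter, mem_univ, true_and]
                    have hs2 : s ≠ j := ne_of_lt (lt_trans h1 hltj2)
                    rw [hσ't s hs1 hs2, hσ'tt]
                    exact ⟨h1, h2⟩
                have h3 := Finset.card_le_card hsub
                have h4 := Finset.card_insert_le i
                  (Finset.univ.filter fun s => s < t ∧ σ' t < σ' s)
                unfold r
                push_cast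
                omega
              · rw [if_neg (by rintro ⟨-, h⟩; exact hat h)]
                have hat' : σ t < a := by
                  rcases lt_trichotomy (σ t) a with h | h | h
                  · exact h
                  · exact absurd (σ.injective (ha ▸ h : σ t = σ j)) htj
                  · exact absurd h hat
                have hsub : (Finset.univ.filter fun s => s < t ∧ σ t < σ s) ⊆
                    (Finset.univ.filter fun s => s < t ∧ σ' t < σ' s) := by
                  intro s hs
                  simp only [mem_filter, mem_univ, true_and] at hs ⊢
                  obtain ⟨h1, h2⟩ := hs
                  by_cases hs1 : s = i
                  · subst hs1
                    rw [hσ'i, hσ'tt]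
                    exact ⟨h1, hat'⟩
                  · have hs2 : s ≠ j := ne_of_lt (lt_trans h1 hltj2)
                    rw [hσ't s hs1 hs2, hσ'tt]
                    exact ⟨h1, h2⟩
                have := Finset.card_le_card hsub
                unfold r
                push_cast
                omega
            · exact absurd heq2 htj
            · -- t > j : injection via swap
              rw [if_neg (by rintro ⟨⟨-, h⟩, -⟩; exact absurd hgtj2 (lt_asymm h))]
              have hinj : r σ t ≤ r σ' t := by
                unfold r
                refine Finset.card_le_card_of_injOn (fun s => Equiv.swap i j s) ?_ ?_
                · intro s hs
                  simp only [Finset.mem_coe, mem_filter, mem_univ, true_and] at hs ⊢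
                  obtain ⟨h1, h2⟩ := hs
                  have happ : σ' (Equiv.swap i j s) = σ s := by
                    simp [hσ', Equiv.Perm.mul_apply, Equiv.swap_apply_self]
                  rw [happ, hσ'tt]
                  refine ⟨?_, h2⟩
                  by_cases hs1 : s = i
                  · rw [hs1, Equiv.swap_apply_left]; exact hgtj2
                  · by_cases hs2 : s = j
                    · rw [hs2, Equiv.swap_apply_right]; exact lt_trans hij hgtj2
                    · rw [Equiv.swap_apply_of_ne_of_ne hs1 hs2]; exact h1
                · intro x _ y _ hxy
                  exact (Equiv.swap i j).injective hxy
              push_cast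
              omega
    -- sum the pointwise bounds
    have hsum : (invp σ : ℤ) - invp σ' ≤ 1 + 2 * Q := by
      rw [invp_eq_sum_r, invp_eq_sum_r]
      push_cast
      rw [← Finset.sum_sub_distrib]
      calc ∑ t : Fin m, ((r σ t : ℤ) - r σ' t) ≤
          ∑ t : Fin m, ((if t = j then (Pset.card : ℤ) + 1 + Q else 0) -
            (if t = i then (Pset.card : ℤ) else 0) +
            (if (i < t ∧ t < j) ∧ a < σ t then 1 else 0)) :=
            Finset.sum_le_sum fun t _ => hpt t
        _ = 1 + 2 * Q := by
            rw [Finset.sum_add_distrib, Finset.sum_sub_distrib]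
            rw [Finset.sum_ite_eq' Finset.univ j
              (fun _ => (Pset.card : ℤ) + 1 + Q)]
            rw [Finset.sum_ite_eq' Finset.univ i (fun _ => (Pset.card : ℤ))]
            rw [Finset.sum_boole]
            simp only [mem_univ, if_true]
            rw [← hQset, ← hQ]
            ring
    -- Q bounds
    have hQ1 : Q + (i : ℕ) + 1 ≤ (j : ℕ) := by
      have hsub : Qset ⊆ Finset.Ioo i j := by
        intro s hs
        simp only [hQset, mem_filter, mem_univ, true_and] at hs
        exact Finset.mem_Ioo.mpr hs.1
      have := Finset.card_le_card hsub
      rw [Fin.card_Ioo] at this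
      have : Q ≤ (j : ℕ) - (i : ℕ) - 1 := by rw [hQ]; omega
      have hij' : (i : ℕ) < (j : ℕ) := hij
      omega
    have hQ2 : Q + (a : ℕ) + 1 ≤ (j : ℕ) := by
      have hinj : Q ≤ (Finset.Ioo a j).card := by
        rw [hQ]
        refine Finset.card_le_card_of_injOn (fun s => σ s) ?_ ?_
        · intro s hs
          simp only [Finset.mem_coe, hQset, mem_filter, mem_univ, true_and] at hs
          obtain ⟨⟨h1, h2⟩, h3⟩ := hs
          exact Finset.mem_Ioo.mpr ⟨h3, hlt s h2 (ne_of_gt h1)⟩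
        · intro x _ y _ hxy
          exact σ.injective hxy
      rw [Fin.card_Ioo] at hinj
      have haj' : (a : ℕ) < (j : ℕ) := haj
      omega
    -- footrule difference
    have hF : Fp σ - Fp σ' = (v j - v i) + (v j - v a) - |v a - v i| := by
      have := Fp_mul_swap σ hine
      rw [← hσ'] at this
      rw [this, hσi, ← ha]
      have h1 : |v j - v i| = v j - v i := abs_of_nonneg (by
        have : (i : ℕ) < (j : ℕ) := hij
        unfold v; omega)
      have h2 : |v j - v j| = 0 := by simp
      have h3 : |v a - v j| = v j - v a := by
        rw [abs_sub_comm]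
        exact abs_of_nonneg (by
          have : (a : ℕ) < (j : ℕ) := haj
          unfold v; omega)
      rw [h1, h2, h3]
      ring
    rw [hF]
    have hva : v a = ((a : ℕ) : ℤ) := rfl
    have hvi : v i = ((i : ℕ) : ℤ) := rfl
    have hvj : v j = ((j : ℕ) : ℤ) := rfl
    rcases abs_cases (v a - v i) with ⟨he, -⟩ | ⟨he, -⟩ <;>
    · rw [he] at *
      rw [hva, hvi, hvj] at *
      push_cast at *
      omega


def K2 (p q : Equiv.Perm (Fin m)) : ℕ :=
  (Finset.univ.filter fun ij : Fin m × Fin m =>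
    ij.1 ≠ ij.2 ∧ ¬((p⁻¹ ij.1 < p⁻¹ ij.2) ↔ (q⁻¹ ij.1 < q⁻¹ ij.2))).card

lemma cond_symm (p q : Equiv.Perm (Fin m)) {a b : Fin m} (hab : a ≠ b)
    (h : ¬((p⁻¹ a < p⁻¹ b) ↔ (q⁻¹ a < q⁻¹ b))) :
    ¬((p⁻¹ b < p⁻¹ a) ↔ (q⁻¹ b < q⁻¹ a)) := by
  have hp : p⁻¹ a ≠ p⁻¹ b := fun h' => hab (p⁻¹.injective h')
  have hq : q⁻¹ a ≠ q⁻¹ b := fun h' => hab (q⁻¹.injective h')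
  have h1 : p⁻¹ b < p⁻¹ a ↔ ¬(p⁻¹ a < p⁻¹ b) :=
    ⟨fun h' h'' => lt_asymm h' h'', fun h' => (hp.lt_or_gt).resolve_left h'⟩
  have h2 : q⁻¹ b < q⁻¹ a ↔ ¬(q⁻¹ a < q⁻¹ b) :=
    ⟨fun h' h'' => lt_asymm h' h'', fun h' => (hq.lt_or_gt).resolve_left h'⟩
  rw [h1, h2]
  tauto

lemma K2_eq_two_kendall (p q : Equiv.Perm (Fin m)) : K2 p q = 2 * kendall p q := by
  classical
  unfold K2 kendall
  have hsplit : (Finset.univ.filter fun ij : Fin m × Fin m =>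
      ij.1 ≠ ij.2 ∧ ¬((p⁻¹ ij.1 < p⁻¹ ij.2) ↔ (q⁻¹ ij.1 < q⁻¹ ij.2))) =
    (Finset.univ.filter fun ij : Fin m × Fin m =>
      ij.1 < ij.2 ∧ ¬((p⁻¹ ij.1 < p⁻¹ ij.2) ↔ (q⁻¹ ij.1 < q⁻¹ ij.2))) ∪
    (Finset.univ.filter fun ij : Fin m × Fin m =>
      ij.2 < ij.1 ∧ ¬((p⁻¹ ij.1 < p⁻¹ ij.2) ↔ (q⁻¹ ij.1 < q⁻¹ ij.2))) := by
    ext ij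
    simp only [mem_filter, mem_univ, true_and, Finset.mem_union]
    constructor
    · rintro ⟨h1, h2⟩
      rcases h1.lt_or_gt with h | h
      · exact Or.inl ⟨h, h2⟩
      · exact Or.inr ⟨h, h2⟩
    · rintro (⟨h1, h2⟩ | ⟨h1, h2⟩)
      · exact ⟨ne_of_lt h1, h2⟩
      · exact ⟨(ne_of_lt h1).symm, h2⟩
  rw [hsplit, Finset.card_union_of_disjoint (by
    rw [Finset.disjoint_filter]
    rintro ij - ⟨h1, -⟩ ⟨h2, -⟩
    exact lt_asymm h1 h2)]
  have hswap : (Finset.univ.filter fun ij : Fin m × Fin m =>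
      ij.2 < ij.1 ∧ ¬((p⁻¹ ij.1 < p⁻¹ ij.2) ↔ (q⁻¹ ij.1 < q⁻¹ ij.2))).card =
    (Finset.univ.filter fun ij : Fin m × Fin m =>
      ij.1 < ij.2 ∧ ¬((p⁻¹ ij.1 < p⁻¹ ij.2) ↔ (q⁻¹ ij.1 < q⁻¹ ij.2))).card := by
    refine Finset.card_nbij' (fun ij => (ij.2, ij.1)) (fun ij => (ij.2, ij.1)) ?_ ?_ ?_ ?_
    · intro ij hij
      simp only [Finset.mem_coe, mem_filter, mem_univ, true_and] at hij ⊢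
      exact ⟨hij.1, cond_symm p q (ne_of_gt hij.1) hij.2⟩
    · intro ij hij
      simp only [Finset.mem_coe, mem_filter, mem_univ, true_and] at hij ⊢
      exact ⟨hij.1, cond_symm p q (ne_of_lt hij.1) hij.2⟩
    · intro ij _; rfl
    · intro ij _; rfl
  omega

lemma K2_left_invariant (σ p q : Equiv.Perm (Fin m)) : K2 (σ * p) (σ * q) = K2 p q := by
  classical
  unfold K2
  refine Finset.card_nbij' (fun ij => (σ⁻¹ ij.1, σ⁻¹ ij.2)) (fun ij => (σ ij.1, σ ij.2))
    ?_ ?_ ?_ ?_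
  · intro ij hij
    simp only [Finset.mem_coe, mem_filter, mem_univ, true_and, mul_inv_rev, Equiv.Perm.mul_apply] at hij ⊢
    exact ⟨fun h => hij.1 (by simpa using congrArg σ h), hij.2⟩
  · intro ij hij
    simp only [Finset.mem_coe, mem_filter, mem_univ, true_and, mul_inv_rev, Equiv.Perm.mul_apply] at hij ⊢
    refine ⟨fun h => hij.1 (σ.injective h), ?_⟩
    simpa using hij.2
  · intro ij _; simp
  · intro ij _; simp

lemma kendall_left_invariant (σ p q : Equiv.Perm (Fin m)) :
    kendall (σ * p) (σ * q) = kendall p q := by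
  have h := K2_left_invariant σ p q
  rw [K2_eq_two_kendall, K2_eq_two_kendall] at h
  omega

lemma spearman_left_invariant (σ p q : Equiv.Perm (Fin m)) :
    spearman (σ * p) (σ * q) = spearman p q := by
  unfold spearman
  rw [← Equiv.sum_comp σ (fun i : Fin m =>
    |((((σ * p)⁻¹ i : Fin m) : ℕ) : ℤ) - ((((σ * q)⁻¹ i : Fin m) : ℕ) : ℤ)|)]
  refine Finset.sum_congr rfl fun u _ => ?_
  simp [mul_inv_rev, Equiv.Perm.mul_apply]

lemma kendall_one_eq (p : Equiv.Perm (Fin m)) : kendall p 1 = invp p⁻¹ := by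
  unfold kendall invp
  refine congrArg Finset.card (Finset.filter_congr fun ij _ => ?_)
  simp only [inv_one, Equiv.Perm.coe_one, id_eq]
  constructor
  · rintro ⟨h1, h2⟩
    refine ⟨h1, ?_⟩
    have hne : p⁻¹ ij.1 ≠ p⁻¹ ij.2 := fun h => (ne_of_lt h1) (p⁻¹.injective h)
    rcases hne.lt_or_gt with h | h
    · exact absurd (iff_of_true h h1) h2
    · exact h
  · rintro ⟨h1, h2⟩
    exact ⟨h1, fun h => absurd (h.mpr h1) (lt_asymm h2)⟩

lemma spearman_one (p : Equiv.Perm (Fin m)) : spearman p 1 = Fp p⁻¹ := by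
  unfold spearman Fp v
  simp


lemma invp_le_Fp (σ : Equiv.Perm (Fin m)) : (invp σ : ℤ) ≤ Fp σ := by
  suffices h : ∀ (n : ℕ) (σ : Equiv.Perm (Fin m)),
      (Finset.univ.filter fun t => σ t ≠ t).card ≤ n → (invp σ : ℤ) ≤ Fp σ from
    h _ σ le_rfl
  intro n
  induction n with
  | zero =>
    intro σ h
    have h1 : σ = 1 := by
      ext x
      by_contra hx
      have hx' : σ x ≠ x := fun he => hx (by simp [he])
      have hmem : x ∈ Finset.univ.filter fun t => σ t ≠ t := by simp [hx']
      have := Finset.card_pos.mpr ⟨_, hmem⟩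
      omega
    rw [h1, invp_one, Fp_one]
    norm_num
  | succ n ih =>
    intro σ h
    by_cases h1 : σ = 1
    · rw [h1, invp_one, Fp_one]; norm_num
    · obtain ⟨σ', hcard, hineq⟩ := homing σ h1
      have h2 := ih σ' (by omega)
      linarith

end DG

theorem kendall_le_spearman_le_two_kendall {m : ℕ} (p q : Equiv.Perm (Fin m)) :
    (kendall p q : ℤ) ≤ spearman p q ∧ spearman p q ≤ 2 * (kendall p q : ℤ) := by
  have e1 : kendall (q⁻¹ * p) 1 = kendall p q := by
    have h := DG.kendall_left_invariant q⁻¹ p q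
    rwa [inv_mul_cancel] at h
  have e2 : spearman (q⁻¹ * p) 1 = spearman p q := by
    have h := DG.spearman_left_invariant q⁻¹ p q
    rwa [inv_mul_cancel] at h
  constructor
  · rw [← e1, ← e2, DG.kendall_one_eq, DG.spearman_one]
    exact DG.invp_le_Fp _
  · rw [← e1, ← e2, DG.kendall_one_eq, DG.spearman_one]
    exact DG.Fp_le_two_invp _
end

section
/- For i ≤ j in Fin m, the Spearman footrule distance between the identity permutation ι and the move permutation m_{i,j} equals twice the displacement: F(ι, m_{i,j}) = 2·(j − i). -/
/-- The underlying function of the move permutation `m_{i,j}` (for `i ≤ j`):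
`i ↦ j` and `k ↦ k - 1` for `i < k ≤ j`, all other points fixed. -/
def moveFun {m : ℕ} (i j : Fin m) (k : Fin m) : Fin m :=
  if k = i then j
  else if i < k ∧ k ≤ j then ⟨k.val - 1, by have := k.isLt; omega⟩
  else k

/-- The inverse function of the move permutation `m_{i,j}` (for `i ≤ j`). -/
def moveInvFun {m : ℕ} (i j : Fin m) (k : Fin m) : Fin m :=
  if k = j then i
  else if h : i ≤ k ∧ k < j then
    ⟨k.val + 1, by have h2 := Fin.lt_def.mp h.2; have := j.isLt; omega⟩
  else k

/-- The move permutation `m_{i,j}` for `i ≤ j`: the cyclic permutation sending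
`i ↦ j` and `k ↦ k - 1` for every `k` with `i < k ≤ j`, fixing all other points
(and the identity if `¬ i ≤ j`). -/
def movePerm {m : ℕ} (i j : Fin m) : Equiv.Perm (Fin m) :=
  if hij : i ≤ j then
    { toFun := moveFun i j
      invFun := moveInvFun i j
      left_inv := by
        intro k
        have hjm := j.isLt
        have him := i.isLt
        have hkm := k.isLt
        unfold moveFun moveInvFun
        split_ifs <;>
          simp_all only [Fin.ext_iff, Fin.lt_def, Fin.le_def, not_and, not_le, not_lt] <;>
          omega
      right_inv := by
        intro k
        have hjm := j.isLt
        have him := i.isLt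
        have hkm := k.isLt
        unfold moveFun moveInvFun
        split_ifs <;>
          simp_all only [Fin.ext_iff, Fin.lt_def, Fin.le_def, not_and, not_le, not_lt] <;>
          omega }
  else 1

theorem spearman_movePerm {m : ℕ} (i j : Fin m) (hij : i ≤ j) :
    spearman (1 : Equiv.Perm (Fin m)) (movePerm i j) = 2 * ((j : ℤ) - (i : ℤ)) := by
  have hinv : ∀ k : Fin m, (movePerm i j)⁻¹ k = moveInvFun i j k := by
    intro k
    simp [movePerm, dif_pos hij, Equiv.Perm.inv_def]
  have hle : (i : ℕ) ≤ (j : ℕ) := hij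
  unfold spearman
  have hpt : ∀ k : Fin m,
      |((((1 : Equiv.Perm (Fin m))⁻¹ k : Fin m) : ℕ) : ℤ) - (((((movePerm i j)⁻¹ k) : Fin m) : ℕ) : ℤ)| =
      (if (k : ℕ) = (j : ℕ) then ((j : ℤ) - (i : ℤ)) else 0) +
      (if (i : ℕ) ≤ (k : ℕ) ∧ (k : ℕ) < (j : ℕ) then (1 : ℤ) else 0) := by
    intro k
    rw [hinv]
    simp only [inv_one, Equiv.Perm.coe_one, id_eq]
    unfold moveInvFun
    rcases eq_or_ne k j with rfl | hkj
    · rw [if_pos rfl, if_pos rfl, if_neg (by omega), add_zero,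
        abs_of_nonneg (by omega)]
    · have hkj' : (k : ℕ) ≠ (j : ℕ) := fun h => hkj (Fin.ext h)
      rw [if_neg hkj, if_neg hkj']
      by_cases h2 : i ≤ k ∧ k < j
      · have h2' : (i : ℕ) ≤ (k : ℕ) ∧ (k : ℕ) < (j : ℕ) := ⟨h2.1, h2.2⟩
        rw [dif_pos h2, if_pos h2', zero_add,
          abs_of_nonpos (by push_cast; omega)]
        push_cast
        omega
      · have h2' : ¬((i : ℕ) ≤ (k : ℕ) ∧ (k : ℕ) < (j : ℕ)) := by
          intro h
          exact h2 ⟨h.1, h.2⟩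
        rw [dif_neg h2, if_neg h2']
        simp
  rw [Finset.sum_congr rfl (fun k _ => hpt k)]
  rw [Finset.sum_add_distrib]
  rw [Fin.sum_univ_eq_sum_range (fun n => if n = (j : ℕ) then ((j : ℤ) - (i : ℤ)) else 0)]
  rw [Fin.sum_univ_eq_sum_range (fun n => if (i : ℕ) ≤ n ∧ n < (j : ℕ) then (1 : ℤ) else 0)]
  rw [Finset.sum_ite_eq' (Finset.range m) (j : ℕ) (fun _ => (j : ℤ) - (i : ℤ))]
  rw [if_pos (Finset.mem_range.mpr j.isLt)]
  rw [Finset.sum_ite, Finset.sum_const_zero, Finset.sum_const, add_zero]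
  have hfil : (Finset.range m).filter (fun n => (i : ℕ) ≤ n ∧ n < (j : ℕ)) = Finset.Ico (i : ℕ) (j : ℕ) := by
    ext n
    simp [Finset.mem_filter, Finset.mem_range, Finset.mem_Ico]
    intro _ h
    omega
  rw [hfil, Nat.card_Ico, nsmul_eq_mul]
  omega
end

section
/- For i ≤ j in Fin m, the Kendall tau distance between the identity permutation ι and the move permutation m_{i,j} equals the displacement: K(ι, m_{i,j}) = j − i. -/
lemma movePerm_inv_apply {m : ℕ} (i j : Fin m) (hij : i ≤ j) (k : Fin m) :
    (movePerm i j)⁻¹ k = moveInvFun i j k := by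
  unfold movePerm
  rw [dif_pos hij]
  rfl

theorem kendall_movePerm {m : ℕ} (i j : Fin m) (hij : i ≤ j) :
    kendall (1 : Equiv.Perm (Fin m)) (movePerm i j) = (j : ℕ) - (i : ℕ) := by
  unfold kendall
  have hset : (Finset.univ.filter fun ij' : Fin m × Fin m =>
      ij'.1 < ij'.2 ∧ ¬(((1 : Equiv.Perm (Fin m))⁻¹ ij'.1 < (1 : Equiv.Perm (Fin m))⁻¹ ij'.2) ↔
        ((movePerm i j)⁻¹ ij'.1 < (movePerm i j)⁻¹ ij'.2)))
      = (Finset.Ico i j) ×ˢ ({j} : Finset (Fin m)) := by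
    ext ⟨a, b⟩
    simp only [Finset.mem_filter, Finset.mem_univ, true_and, Finset.mem_product,
      Finset.mem_Ico, Finset.mem_singleton, movePerm_inv_apply i j hij,
      Equiv.Perm.one_apply, inv_one]
    rw [show ∀ (P Q : Prop), (P ∧ ¬(P ↔ Q)) ↔ (P ∧ ¬Q) from fun P Q => by tauto]
    unfold moveInvFun
    have him := i.isLt
    have hjm := j.isLt
    have ham := a.isLt
    have hbm := b.isLt
    constructor
    · rintro ⟨hab, h⟩
      split_ifs at h <;>
        simp only [Fin.ext_iff, Fin.lt_def, Fin.le_def, not_and, not_le, not_lt] at * <;>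
        omega
    · rintro ⟨⟨hia, haj⟩, hbj⟩
      split_ifs <;>
        simp only [Fin.ext_iff, Fin.lt_def, Fin.le_def, not_and, not_le, not_lt] at * <;>
        omega
  rw [hset, Finset.card_product, Finset.card_singleton, mul_one, Fin.card_Ico]
end

section
/- Let 𝔽 be a field and D an m × m matrix over 𝔽. If (R₁, V₁) and (R₂, V₂) are two valid decompositions of D, then for every column index j: the j-th column of R₁ is zero if and only if the j-th column of R₂ is zero, and when both are nonzero, low_{R₁}(j) = low_{R₂}(j). In other words, the persistence pairing determined by the low entries of R is independent of the choice of valid decomposition. -/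
open Matrix

/-- The lowest nonzero row index of column `j` of `R` (`none` if the column is zero). -/
def lowOpt {𝔽 : Type*} [Field 𝔽] [DecidableEq 𝔽] {m : ℕ}
    (R : Matrix (Fin m) (Fin m) 𝔽) (j : Fin m) : Option (Fin m) :=
  (Finset.univ.filter fun i => R i j ≠ 0).max

/-- `R` is reduced: distinct nonzero columns have distinct lowest nonzero entries. -/
def Reduced {𝔽 : Type*} [Field 𝔽] [DecidableEq 𝔽] {m : ℕ}
    (R : Matrix (Fin m) (Fin m) 𝔽) : Prop :=
  ∀ j k : Fin m, j ≠ k → (∃ i, R i j ≠ 0) → (∃ i, R i k ≠ 0) →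
    lowOpt R j ≠ lowOpt R k

/-- `(R, V)` is a valid decomposition of `D`: `R = D * V`, `V` upper triangular
and invertible, and `R` reduced. -/
def ValidDecomp {𝔽 : Type*} [Field 𝔽] [DecidableEq 𝔽] {m : ℕ}
    (D R V : Matrix (Fin m) (Fin m) 𝔽) : Prop :=
  R = D * V ∧ V.BlockTriangular id ∧ IsUnit V ∧ Reduced R

section Aux

variable {𝔽 : Type*} [Field 𝔽] [DecidableEq 𝔽] {m : ℕ}

/-- low of a vector. -/
def lowv (v : Fin m → 𝔽) : Option (Fin m) :=
  (Finset.univ.filter fun i => v i ≠ 0).max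

lemma lowOpt_eq_lowv (R : Matrix (Fin m) (Fin m) 𝔽) (j : Fin m) :
    lowOpt R j = lowv (fun i => R i j) := rfl

lemma lowv_eq_some_iff {v : Fin m → 𝔽} {i : Fin m} :
    lowv v = some i ↔ v i ≠ 0 ∧ ∀ i', i < i' → v i' = 0 := by
  constructor
  · intro h
    have hmem := Finset.mem_of_max h
    simp only [Finset.mem_filter, Finset.mem_univ, true_and] at hmem
    refine ⟨hmem, fun i' hi' => ?_⟩
    by_contra hne
    have hm : i' ∈ Finset.univ.filter fun i => v i ≠ 0 := by
      simp [hne]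
    have := Finset.le_max_of_eq hm h
    exact absurd this (not_le.mpr hi')
  · rintro ⟨h0, hgt⟩
    have hmem : i ∈ Finset.univ.filter fun i => v i ≠ 0 := by simp [h0]
    show (Finset.univ.filter fun i => v i ≠ 0).max = (i : WithBot (Fin m))
    refine le_antisymm ?_ (Finset.le_max hmem)
    refine Finset.max_le fun a ha => ?_
    simp only [Finset.mem_filter, Finset.mem_univ, true_and] at ha
    by_contra hc
    push_neg at hc
    have hlt : i < a := by exact_mod_cast hc
    exact ha (hgt a hlt)

lemma lowv_isSome_of_ne {v : Fin m → 𝔽} (h : ∃ i, v i ≠ 0) :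
    ∃ i, lowv v = some i := by
  obtain ⟨i, hi⟩ := h
  have : (Finset.univ.filter fun i => v i ≠ 0).Nonempty := ⟨i, by simp [hi]⟩
  exact Finset.max_of_nonempty this

lemma exists_ne_of_lowv {v : Fin m → 𝔽} {i : Fin m} (h : lowv v = some i) :
    v i ≠ 0 := (lowv_eq_some_iff.mp h).1

/-- Key lemma: the low of a nontrivial linear combination of nonzero vectors with
pairwise distinct lows is the maximum of the lows. -/
lemma lowv_sum (S : Finset (Fin m)) (hS : S.Nonempty) (a : Fin m → 𝔽)
    (c : Fin m → Fin m → 𝔽) (L : Fin m → Fin m)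
    (ha : ∀ k ∈ S, a k ≠ 0)
    (hL : ∀ k ∈ S, lowv (c k) = some (L k))
    (hinj : ∀ k ∈ S, ∀ l ∈ S, k ≠ l → L k ≠ L l) :
    ∃ k₀ ∈ S, lowv (∑ k ∈ S, a k • c k) = some (L k₀) := by
  obtain ⟨k₀, hk₀, hmax⟩ := S.exists_max_image L hS
  refine ⟨k₀, hk₀, lowv_eq_some_iff.mpr ⟨?_, ?_⟩⟩
  · have he : (∑ k ∈ S, a k • c k) (L k₀) = ∑ k ∈ S, a k * c k (L k₀) := by
      simp [Finset.sum_apply]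
    rw [he, Finset.sum_eq_single k₀]
    · exact mul_ne_zero (ha k₀ hk₀) (exists_ne_of_lowv (hL k₀ hk₀))
    · intro k hk hne
      have hlt : L k < L k₀ := lt_of_le_of_ne (hmax k hk) (hinj k hk k₀ hk₀ hne)
      rw [(lowv_eq_some_iff.mp (hL k hk)).2 _ hlt, mul_zero]
    · intro h; exact absurd hk₀ h
  · intro i' hi'
    have he : (∑ k ∈ S, a k • c k) i' = ∑ k ∈ S, a k * c k i' := by
      simp [Finset.sum_apply]
    rw [he]
    refine Finset.sum_eq_zero fun k hk => ?_
    rw [(lowv_eq_some_iff.mp (hL k hk)).2 _ (lt_of_le_of_lt (hmax k hk) hi'), mul_zero]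

/-- The set of lows of nonzero columns indexed by `s`. -/
def lowSet (R : Matrix (Fin m) (Fin m) 𝔽) (s : Finset (Fin m)) : Finset (Fin m) :=
  Finset.univ.filter fun i => ∃ k ∈ s, lowOpt R k = some i

lemma mem_lowSet {R : Matrix (Fin m) (Fin m) 𝔽} {s : Finset (Fin m)} {i : Fin m} :
    i ∈ lowSet R s ↔ ∃ k ∈ s, lowOpt R k = some i := by
  simp [lowSet]

/-- Characterization of `lowSet` independent of the decomposition. -/
lemma lowSet_char {D R V : Matrix (Fin m) (Fin m) 𝔽} (h : ValidDecomp D R V)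
    {s : Finset (Fin m)} (hs : ∀ k l : Fin m, k ≤ l → l ∈ s → k ∈ s) (i : Fin m) :
    i ∈ lowSet R s ↔
      ∃ x : Fin m → 𝔽, (∀ k, k ∉ s → x k = 0) ∧ lowv (D *ᵥ x) = some i := by
  obtain ⟨hRD, hVt, hVu, hRred⟩ := h
  constructor
  · intro hi
    obtain ⟨k, hk, hlow⟩ := mem_lowSet.mp hi
    refine ⟨fun l => V l k, fun l hl => ?_, ?_⟩
    · by_contra hne
      have hle : l ≤ k := by
        by_contra hgt
        exact hne (hVt (show (id k : Fin m) < id l from not_le.mp hgt))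
      exact hl (hs l k hle hk)
    · have hcol : D *ᵥ (fun l => V l k) = fun r => R r k := by
        funext r
        simp [Matrix.mulVec, dotProduct, hRD, Matrix.mul_apply]
      rw [hcol, ← lowOpt_eq_lowv]
      exact hlow
  · rintro ⟨x, hx, hlow⟩
    have hVdet : IsUnit V.det := (Matrix.isUnit_iff_isUnit_det V).mp hVu
    have hInv : Invertible V := V.invertibleOfIsUnitDet hVdet
    set y := V⁻¹ *ᵥ x with hy
    have hVy : V *ᵥ y = x := by
      rw [hy, Matrix.mulVec_mulVec, Matrix.mul_nonsing_inv _ hVdet, Matrix.one_mulVec]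
    have hDx : D *ᵥ x = R *ᵥ y := by
      calc D *ᵥ x = D *ᵥ (V *ᵥ y) := by rw [hVy]
        _ = (D * V) *ᵥ y := by rw [Matrix.mulVec_mulVec]
        _ = R *ᵥ y := by rw [hRD]
    have hysup : ∀ l, l ∉ s → y l = 0 := by
      intro l hl
      have hVinv : (V⁻¹).BlockTriangular id :=
        Matrix.blockTriangular_inv_of_blockTriangular hVt
      show (V⁻¹ *ᵥ x) l = 0
      simp only [Matrix.mulVec, dotProduct]
      refine Finset.sum_eq_zero fun q _ => ?_
      by_cases hq : q ∈ s
      · have hlt : q < l := by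
          by_contra hge
          exact hl (hs l q (not_lt.mp hge) hq)
        rw [hVinv (show (id q : Fin m) < id l from hlt), zero_mul]
      · rw [hx q hq, mul_zero]
    set S : Finset (Fin m) :=
      Finset.univ.filter fun k => y k ≠ 0 ∧ (∃ r, R r k ≠ 0) with hSdef
    set L : Fin m → Fin m := fun k => (lowOpt R k).getD i with hLdef
    have hLspec : ∀ k ∈ S, lowOpt R k = some (L k) := by
      intro k hk
      simp only [hSdef, Finset.mem_filter, Finset.mem_univ, true_and] at hk
      obtain ⟨v, hv⟩ := lowv_isSome_of_ne (v := fun r => R r k) hk.2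
      rw [lowOpt_eq_lowv, hv, hLdef]
      simp [lowOpt_eq_lowv, hv]
    have hsum : D *ᵥ x = ∑ k ∈ S, y k • (fun r => R r k) := by
      rw [hDx]
      funext r
      simp only [Finset.sum_apply, Pi.smul_apply, smul_eq_mul]
      show ∑ k, R r k * y k = _
      rw [← Finset.sum_subset (Finset.subset_univ S)
        (fun k _ hk => ?_)]
      · exact Finset.sum_congr rfl fun k _ => mul_comm _ _
      · simp only [hSdef, Finset.mem_filter, Finset.mem_univ, true_and, not_and_or,
          not_not, not_exists] at hk
        rcases hk with hk | hk
        · rw [hk, mul_zero]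
        · rw [hk r, zero_mul]
    have hSne : S.Nonempty := by
      rcases Finset.eq_empty_or_nonempty S with hS | hS
      · exfalso
        have h0 : D *ᵥ x = 0 := by rw [hsum, hS, Finset.sum_empty]
        have := exists_ne_of_lowv hlow
        rw [h0] at this
        exact this rfl
      · exact hS
    obtain ⟨k₀, hk₀, hk₀low⟩ := lowv_sum S hSne y (fun k r => R r k) L
      (fun k hk => by
        simp only [hSdef, Finset.mem_filter, Finset.mem_univ, true_and] at hk
        exact hk.1)
      (fun k hk => by rw [← lowOpt_eq_lowv]; exact hLspec k hk)
      (fun k hk l hl hne => by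
        intro hEq
        have hk' := hk; have hl' := hl
        simp only [hSdef, Finset.mem_filter, Finset.mem_univ, true_and] at hk' hl'
        exact hRred k l hne hk'.2 hl'.2 (by rw [hLspec k hk, hLspec l hl, hEq]))
    have hik : i = L k₀ := by
      rw [hsum] at hlow
      rw [hlow] at hk₀low
      exact Option.some.inj hk₀low
    have hk₀mem : k₀ ∈ s := by
      by_contra hc
      have := hysup k₀ hc
      simp only [hSdef, Finset.mem_filter, Finset.mem_univ, true_and] at hk₀
      exact hk₀.1 this
    exact mem_lowSet.mpr ⟨k₀, hk₀mem, by rw [hLspec k₀ hk₀, hik]⟩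

end Aux

theorem pairing_uniqueness {𝔽 : Type*} [Field 𝔽] [DecidableEq 𝔽] {m : ℕ}
    (D R₁ V₁ R₂ V₂ : Matrix (Fin m) (Fin m) 𝔽)
    (h₁ : ValidDecomp D R₁ V₁) (h₂ : ValidDecomp D R₂ V₂) :
    ∀ j : Fin m,
      ((∀ i, R₁ i j = 0) ↔ (∀ i, R₂ i j = 0)) ∧
      ((∃ i, R₁ i j ≠ 0) → (∃ i, R₂ i j ≠ 0) → lowOpt R₁ j = lowOpt R₂ j) := by
  intro j
  set sLe : Finset (Fin m) := Finset.univ.filter (· ≤ j) with hsLe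
  set sLt : Finset (Fin m) := Finset.univ.filter (· < j) with hsLt
  have hsLedc : ∀ k l : Fin m, k ≤ l → l ∈ sLe → k ∈ sLe := by
    intro k l hkl hl
    simp only [hsLe, Finset.mem_filter, Finset.mem_univ, true_and] at hl ⊢
    exact le_trans hkl hl
  have hsLtdc : ∀ k l : Fin m, k ≤ l → l ∈ sLt → k ∈ sLt := by
    intro k l hkl hl
    simp only [hsLt, Finset.mem_filter, Finset.mem_univ, true_and] at hl ⊢
    exact lt_of_le_of_lt hkl hl
  have Ele : lowSet R₁ sLe = lowSet R₂ sLe := by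
    ext i; rw [lowSet_char h₁ hsLedc, lowSet_char h₂ hsLedc]
  have Elt : lowSet R₁ sLt = lowSet R₂ sLt := by
    ext i; rw [lowSet_char h₁ hsLtdc, lowSet_char h₂ hsLtdc]
  -- structure lemmas
  have hzero : ∀ (R : Matrix (Fin m) (Fin m) 𝔽), Reduced R → (∀ i, R i j = 0) →
      lowSet R sLe = lowSet R sLt := by
    intro R _ hz
    ext i
    simp only [mem_lowSet]
    constructor
    · rintro ⟨k, hk, hlow⟩
      simp only [hsLe, Finset.mem_filter, Finset.mem_univ, true_and] at hk
      have hkj : k ≠ j := by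
        rintro rfl
        have := exists_ne_of_lowv ((lowOpt_eq_lowv R k) ▸ hlow)
        exact this (hz i)
      exact ⟨k, by simp [hsLt, lt_of_le_of_ne hk hkj], hlow⟩
    · rintro ⟨k, hk, hlow⟩
      simp only [hsLt, Finset.mem_filter, Finset.mem_univ, true_and] at hk
      exact ⟨k, by simp [hsLe, le_of_lt hk], hlow⟩
  have hnonzero : ∀ (R : Matrix (Fin m) (Fin m) 𝔽), Reduced R →
      ∀ i₀, lowOpt R j = some i₀ →
      lowSet R sLe = insert i₀ (lowSet R sLt) ∧ i₀ ∉ lowSet R sLt := by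
    intro R hred i₀ hlow
    constructor
    · ext i
      simp only [mem_lowSet, Finset.mem_insert]
      constructor
      · rintro ⟨k, hk, hklow⟩
        simp only [hsLe, Finset.mem_filter, Finset.mem_univ, true_and] at hk
        rcases eq_or_ne k j with rfl | hkj
        · left; rw [hlow] at hklow; exact (Option.some.inj hklow).symm
        · right; exact ⟨k, by simp [hsLt, lt_of_le_of_ne hk hkj], hklow⟩
      · rintro (rfl | ⟨k, hk, hklow⟩)
        · exact ⟨j, by simp [hsLe], hlow⟩
        · simp only [hsLt, Finset.mem_filter, Finset.mem_univ, true_and] at hk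
          exact ⟨k, by simp [hsLe, le_of_lt hk], hklow⟩
    · intro hc
      obtain ⟨k, hk, hklow⟩ := mem_lowSet.mp hc
      simp only [hsLt, Finset.mem_filter, Finset.mem_univ, true_and] at hk
      have hkcol : ∃ r, R r k ≠ 0 :=
        ⟨i₀, exists_ne_of_lowv (v := fun r => R r k) hklow⟩
      have hjcol : ∃ r, R r j ≠ 0 :=
        ⟨i₀, exists_ne_of_lowv (v := fun r => R r j) hlow⟩
      exact hred k j (ne_of_lt hk) hkcol hjcol (by rw [hklow, hlow])
  have hred₁ : Reduced R₁ := h₁.2.2.2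
  have hred₂ : Reduced R₂ := h₂.2.2.2
  constructor
  · constructor
    · intro hz1
      by_contra hz2
      push_neg at hz2
      obtain ⟨i₂, hi₂⟩ := lowv_isSome_of_ne (v := fun i => R₂ i j)
        (by obtain ⟨i, hi⟩ := hz2; exact ⟨i, hi⟩)
      have hlow₂ : lowOpt R₂ j = some i₂ := hi₂
      obtain ⟨hins, hnotin⟩ := hnonzero R₂ hred₂ i₂ hlow₂
      have h1 := hzero R₁ hred₁ hz1
      rw [Ele, Elt] at h1
      rw [hins] at h1
      exact hnotin (h1 ▸ Finset.mem_insert_self i₂ _)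
    · intro hz2
      by_contra hz1
      push_neg at hz1
      obtain ⟨i₁, hi₁⟩ := lowv_isSome_of_ne (v := fun i => R₁ i j)
        (by obtain ⟨i, hi⟩ := hz1; exact ⟨i, hi⟩)
      have hlow₁ : lowOpt R₁ j = some i₁ := hi₁
      obtain ⟨hins, hnotin⟩ := hnonzero R₁ hred₁ i₁ hlow₁
      have h2 := hzero R₂ hred₂ hz2
      rw [← Ele, ← Elt] at h2
      rw [hins] at h2
      exact hnotin (h2 ▸ Finset.mem_insert_self i₁ _)
  · intro hn1 hn2
    obtain ⟨i₁, hlow₁⟩ := lowv_isSome_of_ne (v := fun i => R₁ i j) hn1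
    obtain ⟨i₂, hlow₂⟩ := lowv_isSome_of_ne (v := fun i => R₂ i j) hn2
    have hlow₁' : lowOpt R₁ j = some i₁ := hlow₁
    have hlow₂' : lowOpt R₂ j = some i₂ := hlow₂
    obtain ⟨hins₁, hnotin₁⟩ := hnonzero R₁ hred₁ i₁ hlow₁'
    obtain ⟨hins₂, hnotin₂⟩ := hnonzero R₂ hred₂ i₂ hlow₂'
    rw [Ele] at hins₁
    rw [← Elt] at hins₂
    have hII : insert i₁ (lowSet R₁ sLt) = insert i₂ (lowSet R₁ sLt) :=
      hins₁.symm.trans hins₂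
    have hmem : i₁ ∈ insert i₂ (lowSet R₁ sLt) := by
      rw [← hII]; exact Finset.mem_insert_self i₁ _
    rcases Finset.mem_insert.mp hmem with h | h
    · rw [hlow₁', hlow₂', h]
    · exact absurd h hnotin₁
end

section
/- Let a and b be lists over a type with decidable equality, of lengths |a| and |b|. The minimum natural number d such that there exists a chain of lists l₀ = a, l₁, …, l_d = b, in which each l_{k+1} is obtained from l_k by either deleting a single entry or inserting a single entry at some position, equals |a| + |b| − 2 · LCS(a, b). -/
/-- `l'` is obtained from `l` by deleting a single entry or inserting a single
entry at some position. -/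
def InsDelStep {α : Type*} (l l' : List α) : Prop :=
  (∃ i < l.length, l' = l.eraseIdx i) ∨
  (∃ (x : α) (j : ℕ), j ≤ l.length ∧ l' = l.insertIdx j x)

namespace MinInsDelAux

variable {α : Type*} [DecidableEq α]

lemma bdd (a b : List α) :
    BddAbove {n | ∃ l : List α, l.Sublist a ∧ l.Sublist b ∧ l.length = n} :=
  ⟨a.length, fun n ⟨l, hla, _, hl⟩ => hl ▸ hla.length_le⟩

lemma lcs_mem (a b : List α) :
    ∃ l : List α, l.Sublist a ∧ l.Sublist b ∧ l.length = LCS a b := by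
  have h := Nat.sSup_mem (s := {n | ∃ l : List α, l.Sublist a ∧ l.Sublist b ∧ l.length = n})
    ⟨0, [], List.nil_sublist _, List.nil_sublist _, rfl⟩ (bdd a b)
  exact h

lemma le_lcs {a b l : List α} (h₁ : l.Sublist a) (h₂ : l.Sublist b) :
    l.length ≤ LCS a b :=
  le_csSup (bdd a b) ⟨l, h₁, h₂, rfl⟩

lemma lcs_le_left (a b : List α) : LCS a b ≤ a.length := by
  obtain ⟨l, h₁, _, hl⟩ := lcs_mem a b
  exact hl ▸ h₁.length_le

lemma lcs_le_right (a b : List α) : LCS a b ≤ b.length := by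
  obtain ⟨l, _, h₂, hl⟩ := lcs_mem a b
  exact hl ▸ h₂.length_le

lemma lcs_self (b : List α) : LCS b b = b.length :=
  le_antisymm (lcs_le_left b b) (le_lcs (List.Sublist.refl b) (List.Sublist.refl b))

lemma lcs_mono {a₁ a₂ : List α} (b : List α) (h : a₁.Sublist a₂) :
    LCS a₁ b ≤ LCS a₂ b := by
  obtain ⟨l, h₁, h₂, hl⟩ := lcs_mem a₁ b
  exact hl ▸ le_lcs (h₁.trans h) h₂

lemma eraseIdx_witness {m l : List α} (h : m.Sublist l) (i : ℕ) :
    ∃ m' : List α, m'.Sublist (l.eraseIdx i) ∧ m'.Sublist m ∧ m.length ≤ m'.length + 1 := by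
  rcases Nat.lt_or_ge i l.length with hi | hi
  · rw [List.eraseIdx_eq_take_drop_succ]
    have hl : l = l.take i ++ (l[i] :: l.drop (i + 1)) := by
      rw [← List.drop_eq_getElem_cons hi, List.take_append_drop]
    rw [hl] at h
    obtain ⟨m₁, m₂, rfl, h₁, h₂⟩ := List.sublist_append_iff.mp h
    rcases List.sublist_cons_iff.mp h₂ with h₂' | ⟨r, rfl, hr⟩
    · exact ⟨m₁ ++ m₂, h₁.append h₂', List.Sublist.refl _, by omega⟩
    · refine ⟨m₁ ++ r, h₁.append hr,
        (List.sublist_cons_self _ _).append_left m₁, ?_⟩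
      simp; omega
  · exact ⟨m, by rw [List.eraseIdx_of_length_le hi]; exact h, List.Sublist.refl _, by omega⟩

lemma lcs_eraseIdx (l b : List α) (i : ℕ) :
    LCS l b ≤ LCS (l.eraseIdx i) b + 1 := by
  obtain ⟨m, h₁, h₂, hm⟩ := lcs_mem l b
  obtain ⟨m', hm'₁, hm'₂, hlen⟩ := eraseIdx_witness h₁ i
  have := le_lcs hm'₁ (hm'₂.trans h₂)
  omega

/-- Every step is a deletion, one way or the other. -/
lemma step_cases {l l' : List α} (h : InsDelStep l l') :
    (∃ i < l.length, l' = l.eraseIdx i) ∨ (∃ j < l'.length, l = l'.eraseIdx j) := by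
  rcases h with h | ⟨x, j, hj, rfl⟩
  · exact Or.inl h
  · refine Or.inr ⟨j, ?_, (List.eraseIdx_insertIdx_self (i := j) (l := l) x).symm⟩
    rw [List.length_insertIdx, if_pos hj]; omega

lemma step_lcs_len (b : List α) {l l' : List α} (h : InsDelStep l l') :
    (l.length : ℤ) - 2 * LCS l b ≤ ((l'.length : ℤ) - 2 * LCS l' b) + 1 := by
  rcases step_cases h with ⟨i, hi, rfl⟩ | ⟨j, hj, rfl⟩
  · have h₁ := lcs_mono b (List.eraseIdx_sublist l i)
    have h₂ : (l.eraseIdx i).length = l.length - 1 := by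
      rw [List.length_eraseIdx]; simp [hi]
    have h₃ : 0 < l.length := by omega
    omega
  · have h₁ := lcs_eraseIdx l' b j
    have h₂ : (l'.eraseIdx j).length = l'.length - 1 := by
      rw [List.length_eraseIdx]; simp [hj]
    omega

/-- Existence of a chain of the given length. -/
def Chain (d : ℕ) (a b : List α) : Prop :=
  ∃ c : ℕ → List α, c 0 = a ∧ c d = b ∧ ∀ k < d, InsDelStep (c k) (c (k + 1))

lemma chain_refl (a : List α) : Chain 0 a a :=
  ⟨fun _ => a, rfl, rfl, fun k hk => absurd hk (by omega)⟩



lemma chain_snoc {a b b' : List α} {d : ℕ} (hc : Chain d a b) (h : InsDelStep b b') :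
    Chain (d + 1) a b' := by
  obtain ⟨c, h0, hd, hs⟩ := hc
  refine ⟨fun k => if k ≤ d then c k else b', by simp [h0], by simp, ?_⟩
  intro k hk
  rcases Nat.lt_or_ge k d with hkd | hkd
  · simpa [show k ≤ d by omega, show k + 1 ≤ d by omega] using hs k hkd
  · have hkeq : k = d := by omega
    subst hkeq
    simpa [show ¬ (k + 1 ≤ k) by omega, hd] using h

lemma chain_single {a a' : List α} (h : InsDelStep a a') : Chain 1 a a' :=
  chain_snoc (chain_refl a) h

lemma step_cons (x : α) {l l' : List α} (h : InsDelStep l l') :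
    InsDelStep (x :: l) (x :: l') := by
  rcases h with ⟨i, hi, rfl⟩ | ⟨y, j, hj, rfl⟩
  · exact Or.inl ⟨i + 1, by simpa using Nat.succ_lt_succ hi, by simp⟩
  · exact Or.inr ⟨y, j + 1, by simpa using Nat.succ_le_succ hj,
      (List.insertIdx_succ_cons (xs := l) (hd := x) (x := y) (i := j)).symm⟩

lemma chain_map_cons (x : α) {a b : List α} {d : ℕ} (hc : Chain d a b) :
    Chain d (x :: a) (x :: b) := by
  obtain ⟨c, h0, hd, hs⟩ := hc
  exact ⟨fun k => x :: c k, by simp [h0], by simp [hd],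
    fun k hk => step_cons x (hs k hk)⟩

lemma chain_trans {a b e : List α} {d₁ d₂ : ℕ} (h₁ : Chain d₁ a b) (h₂ : Chain d₂ b e) :
    Chain (d₁ + d₂) a e := by
  induction d₂ generalizing e with
  | zero =>
    obtain ⟨c, h0, hd, _⟩ := h₂
    rw [h0] at hd; exact hd ▸ h₁
  | succ n ih =>
    obtain ⟨c, h0, hd, hs⟩ := h₂
    have hcn : Chain n b (c n) := ⟨c, h0, rfl, fun k hk => hs k (by omega)⟩
    have := chain_snoc (ih hcn) (hd ▸ hs n (by omega))
    exact this

lemma del_chain {l a : List α} (h : l.Sublist a) : Chain (a.length - l.length) a l := by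
  induction h with
  | slnil => exact chain_refl []
  | @cons l₁ l₂ x h ih =>
    have hle := h.length_le
    have hstep : InsDelStep (x :: l₂) l₂ := Or.inl ⟨0, by simp, rfl⟩
    have := chain_trans (chain_single hstep) ih
    rw [Nat.add_comm] at this
    have heq : (x :: l₂).length - l₁.length = (l₂.length - l₁.length) + 1 := by
      simp; omega
    rwa [heq]
  | @cons_cons l₁ l₂ x h ih =>
    have heq : (x :: l₂).length - (x :: l₁).length = l₂.length - l₁.length := by simp
    rw [heq]; exact chain_map_cons x ih

lemma ins_chain {l b : List α} (h : l.Sublist b) : Chain (b.length - l.length) l b := by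
  induction h with
  | slnil => exact chain_refl []
  | @cons l₁ l₂ x h ih =>
    have hle := h.length_le
    have hstep : InsDelStep l₂ (x :: l₂) := Or.inr ⟨x, 0, by omega, rfl⟩
    have := chain_snoc ih hstep
    have heq : (x :: l₂).length - l₁.length = (l₂.length - l₁.length) + 1 := by
      simp; omega
    rwa [heq]
  | @cons_cons l₁ l₂ x h ih =>
    have heq : (x :: l₂).length - (x :: l₁).length = l₂.length - l₁.length := by simp
    rw [heq]; exact chain_map_cons x ih

lemma chain_lower (b : List α) {d : ℕ} (c : ℕ → List α)
    (hs : ∀ k < d, InsDelStep (c k) (c (k + 1))) :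
    ((c 0).length : ℤ) - 2 * LCS (c 0) b ≤ ((c d).length : ℤ) - 2 * LCS (c d) b + d := by
  induction d with
  | zero => simp
  | succ n ih =>
    have h₁ := ih (fun k hk => hs k (by omega))
    have h₂ := step_lcs_len b (hs n (by omega))
    push_cast
    omega

end MinInsDelAux

theorem min_insdel_chain_eq_lcs_distance {α : Type*} [DecidableEq α] (a b : List α) :
    IsLeast {d : ℕ | ∃ c : ℕ → List α, c 0 = a ∧ c d = b ∧
        ∀ k < d, InsDelStep (c k) (c (k + 1))}
      (a.length + b.length - 2 * LCS a b) := by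
  constructor
  · obtain ⟨l, h₁, h₂, hl⟩ := MinInsDelAux.lcs_mem a b
    have hc := MinInsDelAux.chain_trans (MinInsDelAux.del_chain h₁) (MinInsDelAux.ins_chain h₂)
    have hla := h₁.length_le
    have hlb := h₂.length_le
    have heq : a.length - l.length + (b.length - l.length)
        = a.length + b.length - 2 * LCS a b := by omega
    rw [heq] at hc
    exact hc
  · rintro d ⟨c, h0, hd, hs⟩
    have := MinInsDelAux.chain_lower b c hs
    rw [h0, hd, MinInsDelAux.lcs_self] at this
    have hle := MinInsDelAux.lcs_le_left a b
    omega
end
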